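/- Let T be a bounded operator on a Hilbert space with ‖I - T‖ ≤ 1. Then T is invertible in B(H) if and only if T is invertible in the closed unital subalgebra generated by I and T. -/

import Mathlib

/-- Let `T ∈ B(H)` with `‖I - T‖ ≤ 1`.  Then `T` is invertible in `B(H)` if and
only if `T` is invertible in the closed unital subalgebra of `B(H)` generated by
`I` and `T`. -/
theorem stmt1 {H : Type*} [NormedAddCommGroup H] [InnerProductSpace ℂ H]
    [CompleteSpace H] (T : H →L[ℂ] H) (hT : ‖1 - T‖ ≤ 1) :
    IsUnit T ↔
      IsUnit (⟨T, (Algebra.adjoin ℂ ({T} : Set (H →L[ℂ] H))).le_topologicalClosure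
        (Algebra.subset_adjoin rfl)⟩ :
        (Algebra.adjoin ℂ ({T} : Set (H →L[ℂ] H))).topologicalClosure) := by
  set A := (Algebra.adjoin ℂ ({T} : Set (H →L[ℂ] H))).topologicalClosure with hAdef
  have hTA : T ∈ A :=
    (Algebra.adjoin ℂ ({T} : Set (H →L[ℂ] H))).le_topologicalClosure
      (Algebra.subset_adjoin rfl)
  constructor
  · intro h
    have hmem : (1 : H →L[ℂ] H) - T ∈ A := A.sub_mem A.one_mem hTA
    have hclosed : IsClosed (A : Set (H →L[ℂ] H)) :=
      Subalgebra.isClosed_topologicalClosure _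
    -- approximating sequence
    set t : ℕ → ℝ := fun n => 1 - ((n : ℝ) + 2)⁻¹ with htdef
    have ht01 : ∀ n, 0 ≤ t n ∧ t n < 1 := by
      intro n
      have h2 : (0 : ℝ) < (n : ℝ) + 2 := by positivity
      constructor
      · have : ((n : ℝ) + 2)⁻¹ ≤ 1 := by
          rw [inv_le_one_iff₀]; right; linarith
        simp [htdef]; linarith
      · simp [htdef]
        positivity
    set x : ℕ → (H →L[ℂ] H) := fun n => ((t n : ℂ)) • (1 - T) with hxdef
    have hxnorm : ∀ n, ‖x n‖ < 1 := by
      intro n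
      have : ‖x n‖ = |t n| * ‖(1 : H →L[ℂ] H) - T‖ := by
        simp [hxdef, norm_smul, Complex.norm_real]
      rw [this, abs_of_nonneg (ht01 n).1]
      calc t n * ‖(1 : H →L[ℂ] H) - T‖ ≤ t n * 1 :=
            mul_le_mul_of_nonneg_left hT (ht01 n).1
        _ = t n := mul_one _
        _ < 1 := (ht01 n).2
    have hxmem : ∀ n, x n ∈ A := fun n => A.smul_mem hmem _
    have hinvmem : ∀ n, Ring.inverse ((1 : H →L[ℂ] H) - x n) ∈ A := by
      intro n
      have hsum : Summable fun k => (x n) ^ k :=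
        summable_geometric_of_norm_lt_one (hxnorm n)
      have heq : Ring.inverse ((1 : H →L[ℂ] H) - x n) = ∑' k, (x n) ^ k :=
        NormedRing.inverse_one_sub _ (hxnorm n)
      rw [heq]
      exact hclosed.mem_of_tendsto hsum.hasSum.tendsto_sum_nat
        (Filter.Eventually.of_forall fun m =>
          A.sum_mem fun k _ => A.pow_mem (hxmem n) k)
    -- the sequence 1 - x n tends to T
    have htt : Filter.Tendsto t Filter.atTop (nhds 1) := by
      have : Filter.Tendsto (fun n : ℕ => ((n : ℝ) + 2)⁻¹) Filter.atTop (nhds 0) := by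
        apply Filter.Tendsto.comp tendsto_inv_atTop_zero
        exact Filter.tendsto_atTop_add_const_right _ 2 tendsto_natCast_atTop_atTop
      simpa using Filter.Tendsto.const_sub 1 this
    have htend : Filter.Tendsto (fun n => (1 : H →L[ℂ] H) - x n) Filter.atTop (nhds T) := by
      have h1 : Filter.Tendsto (fun n => ((t n : ℂ))) Filter.atTop (nhds 1) := by
        exact_mod_cast (Complex.continuous_ofReal.tendsto 1).comp htt
      have h2 : Filter.Tendsto x Filter.atTop (nhds ((1 : ℂ) • ((1 : H →L[ℂ] H) - T))) :=
        h1.smul tendsto_const_nhds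
      have h3 : Filter.Tendsto (fun n => (1 : H →L[ℂ] H) - x n) Filter.atTop
          (nhds ((1 : H →L[ℂ] H) - (1 : ℂ) • ((1 : H →L[ℂ] H) - T))) :=
        tendsto_const_nhds.sub h2
      simpa using h3
    have hcont : Filter.Tendsto (fun n => Ring.inverse ((1 : H →L[ℂ] H) - x n))
        Filter.atTop (nhds (Ring.inverse T)) := by
      have := (NormedRing.inverse_continuousAt h.unit).tendsto
      rw [h.unit_spec] at this
      exact this.comp htend
    have key : Ring.inverse T ∈ A :=
      hclosed.mem_of_tendsto hcont (Filter.Eventually.of_forall hinvmem)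
    refine ⟨⟨⟨T, hTA⟩, ⟨Ring.inverse T, key⟩, ?_, ?_⟩, rfl⟩
    · ext1
      exact Ring.mul_inverse_cancel T h
    · ext1
      exact Ring.inverse_mul_cancel T h
  · intro h
    exact h.map A.val
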